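/- For every integer m ≥ 1 and every integer S ≥ 2, the sum ∑_{j=−S}^{S} (3j² − S(S+1))^{2m+1} is nonnegative. -/

import Mathlib

set_option maxHeartbeats 1000000

open Finset

namespace SpinAux

lemma sum_Icc_top (f : ℤ → ℤ) {a b : ℤ} (h : a ≤ b + 1) :
    ∑ r ∈ Icc a (b+1), f r = (∑ r ∈ Icc a b, f r) + f (b+1) := by
  have he : Icc a (b+1) = insert (b+1) (Icc a b) := by
    ext x; simp only [mem_Icc, mem_insert]; omega
  rw [he, Finset.sum_insert (by simp only [mem_Icc]; omega)]
  ring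

lemma sum_Icc_split (f : ℤ → ℤ) {a b c : ℤ} (hab : a ≤ b) (hbc : b ≤ c) :
    ∑ r ∈ Icc a c, f r = (∑ r ∈ Icc a b, f r) + ∑ r ∈ Icc (b+1) c, f r := by
  rw [← Finset.sum_union (Finset.disjoint_left.mpr (by simp only [mem_Icc]; omega))]
  congr 1
  ext x; simp only [mem_union, mem_Icc]; omega

lemma tangent (j : ℕ) : ∀ x y : ℤ, 0 ≤ x → 0 ≤ y →
    ((j : ℤ) + 1) * x^j * (y - x) + x^(j+1) ≤ y^(j+1) := by
  induction j with
  | zero => intro x y hx hy; simp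
  | succ j ih =>
    intro x y hx hy
    have h1 := ih x y hx hy
    have h2 : y * (((j:ℤ)+1) * x^j * (y-x) + x^(j+1)) ≤ y * y^(j+1) :=
      mul_le_mul_of_nonneg_left h1 hy
    have h3 : (0:ℤ) ≤ ((j:ℤ)+1) * x^j * (y-x)^2 :=
      mul_nonneg (mul_nonneg (by positivity) (pow_nonneg hx j)) (sq_nonneg _)
    push_cast
    calc ((j:ℤ)+1+1) * x^(j+1) * (y - x) + x^(j+1+1)
        = y * (((j:ℤ)+1) * x^j * (y-x) + x^(j+1)) - ((j:ℤ)+1)*x^j*(y-x)^2 := by ring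
      _ ≤ y * y^(j+1) := by linarith
      _ = y^(j+1+1) := by ring

lemma abel (c d : ℤ → ℤ) (hc0 : ∀ i, 0 ≤ i → 0 ≤ c i)
    (hmono : ∀ i, 0 ≤ i → c (i+1) ≤ c i) :
    ∀ n, 0 ≤ n → (∀ ρ, 0 ≤ ρ → ρ ≤ n → 0 ≤ ∑ r ∈ Icc 0 ρ, d r) →
    c n * (∑ r ∈ Icc 0 n, d r) ≤ ∑ r ∈ Icc 0 n, c r * d r := by
  refine Int.le_induction ?_ ?_
  · intro _; simp [Finset.Icc_self]
  · intro n hn ih hD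
    have h1 := ih (fun ρ hr1 hr2 => hD ρ hr1 (by linarith))
    have h2 : 0 ≤ ∑ r ∈ Icc 0 n, d r := hD n hn (by linarith)
    have h3 : c (n+1) ≤ c n := hmono n hn
    have h4 : 0 ≤ c (n+1) := hc0 _ (by linarith)
    rw [sum_Icc_top d (by linarith), sum_Icc_top (fun r => c r * d r) (by linarith)]
    have h5 : 0 ≤ (c n - c (n + 1)) * ∑ r ∈ Icc 0 n, d r :=
      mul_nonneg (by linarith) h2
    nlinarith [h1, h5]

lemma exists_t (S : ℤ) (hS : 2 ≤ S) :
    ∃ t : ℤ, 0 ≤ t ∧ t + 1 ≤ S ∧ S ≤ 2*t ∧ 3*t^2 ≤ S*(S+1) ∧ S*(S+1) < 3*(t+1)^2 := by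
  obtain ⟨n, rfl⟩ : ∃ n : ℕ, S = (n:ℤ) := ⟨S.toNat, (Int.toNat_of_nonneg (by linarith)).symm⟩
  have hn : 2 ≤ n := by exact_mod_cast hS
  set t0 : ℕ := Nat.sqrt (n*(n+1)/3) with ht0def
  have hlbn : 3 * t0^2 ≤ n*(n+1) := by
    have h1 : t0^2 ≤ n*(n+1)/3 := Nat.sqrt_le' _
    have h2 : n*(n+1)/3 * 3 ≤ n*(n+1) := Nat.div_mul_le_self _ _
    omega
  have hubn : n*(n+1) < 3*(t0+1)^2 := by
    have h1 : n*(n+1)/3 < (t0+1)*(t0+1) := Nat.lt_succ_sqrt _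
    have h2 : n*(n+1) < (t0+1)*(t0+1)*3 := (Nat.div_lt_iff_lt_mul (by norm_num)).mp h1
    nlinarith
  have hlb : 3 * (t0:ℤ)^2 ≤ (n:ℤ)*((n:ℤ)+1) := by exact_mod_cast hlbn
  have hub : (n:ℤ)*((n:ℤ)+1) < 3*((t0:ℤ)+1)^2 := by exact_mod_cast hubn
  refine ⟨(t0:ℤ), by positivity, ?_, ?_, hlb, hub⟩
  · -- t0 + 1 ≤ n
    by_contra h
    push_neg at h
    have : (n:ℤ) ≤ (t0:ℤ) := by linarith
    nlinarith
  · -- n ≤ 2 t0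
    by_contra h
    push_neg at h
    have h1 : 2*(t0:ℤ) + 1 ≤ n := by linarith
    have h2 : (2:ℤ) ≤ (n:ℤ) := by exact_mod_cast hn
    nlinarith [sq_nonneg ((n:ℤ) - 2*(t0:ℤ) - 1)]


def bb (S r : ℤ) : ℤ := S*(S+1) - 3*r^2
def vv (S s : ℤ) : ℤ := max (3*(S+1-s)^2 - S*(S+1)) 0
def dd (S : ℤ) (r : ℤ) : ℤ :=
  if r = 0 then vv S 1 - bb S 0 else vv S r + vv S (r+1) - 2 * bb S r
def cc (m : ℕ) (S r : ℤ) : ℤ := (max (bb S r) 0)^(2*m)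

section SetUp
variable {S t : ℤ} (hS : 2 ≤ S) (ht0 : 0 ≤ t) (htS : t + 1 ≤ S) (hS2t : S ≤ 2*t)
  (hlb : 3*t^2 ≤ S*(S+1)) (hub : S*(S+1) < 3*(t+1)^2)

include hub ht0 in
lemma vv_pos_eq {s : ℤ} (hs : t + 1 ≤ S + 1 - s) :
    vv S s = 3*(S+1-s)^2 - S*(S+1) := by
  have h : 0 ≤ 3*(S+1-s)^2 - S*(S+1) := by nlinarith [sq_nonneg (S+1-s-t-1)]
  simpa [vv] using max_eq_left h

include hlb ht0 in
lemma vv_zero {s : ℤ} (h1 : 0 ≤ S + 1 - s) (h2 : S + 1 - s ≤ t) :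
    vv S s = 0 := by
  have h : 3*(S+1-s)^2 - S*(S+1) ≤ 0 := by nlinarith [mul_nonneg (sub_nonneg.mpr h2) h1]
  simpa [vv] using max_eq_right h

include ht0 hlb in
lemma bb_nonneg {r : ℤ} (h1 : 0 ≤ r) (h2 : r ≤ t) : 0 ≤ bb S r := by
  have : r^2 ≤ t^2 := by nlinarith
  simp only [bb]; nlinarith

lemma Bsum : ∀ n : ℤ, 0 ≤ n →
    2 * ∑ r ∈ Icc 0 n, bb S r = 2*(n+1)*(S*(S+1)) - n*(n+1)*(2*n+1) := by
  refine Int.le_induction ?_ ?_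
  · rw [Finset.Icc_self, Finset.sum_singleton, bb]; ring
  · intro n hn ih
    rw [sum_Icc_top (bb S) (by linarith), mul_add, ih, bb]
    ring

include hS ht0 htS hub in
lemma Delta_closed : ∀ ρ : ℤ, 0 ≤ ρ → ρ ≤ S - t - 1 →
    ∑ r ∈ Icc 0 ρ, dd S r
      = S*(S+1)*(2*S+1) - (S-ρ)*((S-ρ)+1)*(2*(S-ρ)+1) + ρ*(ρ+1)*(2*ρ+1)
        + 3*(S-ρ)^2 - 4*ρ*(S*(S+1)) - 2*(S*(S+1)) := by
  refine Int.le_induction ?_ ?_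
  · intro _
    have h1 : vv S 1 = 3*(S+1-1)^2 - S*(S+1) := vv_pos_eq ht0 hub (by linarith)
    rw [Finset.Icc_self, Finset.sum_singleton,
      show dd S 0 = vv S 1 - bb S 0 from if_pos rfl, h1, bb]
    ring
  · intro ρ hρ ih h
    have ih' := ih (by linarith)
    rw [sum_Icc_top (dd S) (by linarith), ih']
    have hne : ρ + 1 ≠ 0 := by omega
    have h1 : vv S (ρ+1) = 3*(S+1-(ρ+1))^2 - S*(S+1) := vv_pos_eq ht0 hub (by linarith)
    have h2 : vv S (ρ+1+1) = 3*(S+1-(ρ+1+1))^2 - S*(S+1) := vv_pos_eq ht0 hub (by linarith)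
    rw [show dd S (ρ+1) = vv S (ρ+1) + vv S (ρ+1+1) - 2 * bb S (ρ+1) from if_neg hne,
      h1, h2, bb]
    ring


include hS ht0 htS hS2t hlb hub in
lemma dd_tail {r : ℤ} (h1 : S - t + 1 ≤ r) (h2 : r ≤ t) : dd S r = -2 * bb S r := by
  have hne : r ≠ 0 := by omega
  rw [show dd S r = vv S r + vv S (r+1) - 2 * bb S r from if_neg hne,
    vv_zero ht0 hlb (by omega) (by omega), vv_zero ht0 hlb (by omega) (by omega)]
  ring

include hS ht0 htS hS2t hlb hub in
lemma Delta_t : ∑ r ∈ Icc 0 t, dd S r = 0 := by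
  have e1 : ∑ r ∈ Icc 0 t, dd S r
      = (∑ r ∈ Icc 0 (S-t-1), dd S r) + ∑ r ∈ Icc (S-t) t, dd S r := by
    have := sum_Icc_split (dd S) (show (0:ℤ) ≤ S-t-1 by omega) (show S-t-1 ≤ t by omega)
    simpa using this
  have e2 : ∑ r ∈ Icc (S-t) t, dd S r
      = dd S (S-t) + ∑ r ∈ Icc (S-t+1) t, dd S r := by
    have := sum_Icc_split (dd S) (le_refl (S-t)) (show S-t ≤ t by omega)
    simpa [Finset.Icc_self] using this
  have e3 : ∑ r ∈ Icc (S-t+1) t, dd S r = -2 * ∑ r ∈ Icc (S-t+1) t, bb S r := by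
    rw [Finset.mul_sum]
    refine Finset.sum_congr rfl (fun r hr => ?_)
    simp only [mem_Icc] at hr
    exact dd_tail hS ht0 htS hS2t hlb hub hr.1 hr.2
  have e4 : 2 * ∑ r ∈ Icc 0 t, bb S r
      = 2 * ∑ r ∈ Icc 0 (S-t), bb S r + 2 * ∑ r ∈ Icc (S-t+1) t, bb S r := by
    rw [sum_Icc_split (bb S) (show (0:ℤ) ≤ S-t by omega) (show S-t ≤ t by omega)]
    ring
  have e5 := Bsum (S := S) t ht0
  have e6 := Bsum (S := S) (S-t) (by omega)
  have e7 := Delta_closed hS ht0 htS hub (S-t-1) (by omega) (by omega)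
  have e8 : dd S (S-t) = 3*(t+1)^2 - S*(S+1) - 2 * bb S (S-t) := by
    have hne : S - t ≠ 0 := by omega
    rw [show dd S (S-t) = vv S (S-t) + vv S (S-t+1) - 2 * bb S (S-t) from if_neg hne,
      vv_pos_eq ht0 hub (by omega), vv_zero ht0 hlb (by omega) (by omega)]
    ring_nf
  rw [e1, e2, e3, e7, e8, bb]
  have e9 : 2 * ∑ r ∈ Icc (S-t+1) t, bb S r
      = (2*(t+1)*(S*(S+1)) - t*(t+1)*(2*t+1))
        - (2*((S-t)+1)*(S*(S+1)) - (S-t)*((S-t)+1)*(2*(S-t)+1)) := by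
    rw [← e5, ← e6]; linarith [e4]
  linarith [e9]

include hS ht0 htS hS2t hlb hub in
lemma Delta_nonneg {ρ : ℤ} (h0 : 0 ≤ ρ) (h1 : ρ ≤ t) :
    0 ≤ ∑ r ∈ Icc 0 ρ, dd S r := by
  rcases le_or_gt ρ (S - t - 1) with hcase | hcase
  · -- untruncated regime
    rw [Delta_closed hS ht0 htS hub ρ h0 hcase]
    have hq1 : t + 1 ≤ S - ρ := by omega
    have h3q : S*(S+1) + 1 ≤ 3*(S-ρ)^2 := by nlinarith [sq_nonneg (S - ρ - t - 1)]
    have h2q : S + 1 ≤ 2*(S-ρ) := by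
      by_contra hcon
      push_neg at hcon
      have h4 : 4*(S-ρ)^2 ≤ S^2 := by nlinarith
      linarith
    rcases eq_or_lt_of_le h0 with hρ0 | hρpos
    · rw [← hρ0]
      nlinarith [hS]
    · have hA : 0 ≤ (S-ρ) * ((2*ρ+1) * (S - 2*ρ - 1)) :=
        mul_nonneg (by omega) (mul_nonneg (by omega) (by omega))
      have hB : 0 ≤ (S-ρ) * (ρ - 1) := mul_nonneg (by omega) (by omega)
      nlinarith [hA, hB]
  · -- truncated regime
    have key : ∑ r ∈ Icc 0 t, dd S r
        = (∑ r ∈ Icc 0 ρ, dd S r) + ∑ r ∈ Icc (ρ+1) t, dd S r :=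
      sum_Icc_split (dd S) h0 h1
    have hnp : ∑ r ∈ Icc (ρ+1) t, dd S r ≤ 0 := by
      refine Finset.sum_nonpos (fun r hr => ?_)
      simp only [mem_Icc] at hr
      rw [dd_tail hS ht0 htS hS2t hlb hub (by omega) hr.2]
      have := bb_nonneg (S := S) ht0 hlb (show 0 ≤ r by omega) hr.2
      linarith
    have := Delta_t hS ht0 htS hS2t hlb hub
    linarith


lemma cc_nonneg (m : ℕ) (i : ℤ) : 0 ≤ cc m S i := pow_nonneg (le_max_right _ _) _

lemma cc_mono (m : ℕ) {i : ℤ} (hi : 0 ≤ i) : cc m S (i+1) ≤ cc m S i := by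
  have hb : bb S (i+1) ≤ bb S i := by simp only [bb]; nlinarith
  exact pow_le_pow_left₀ (le_max_right _ _) (max_le_max hb le_rfl) _

end SetUp
end SpinAux

open Finset SpinAux in
/-- The inequality (3.6) for integer spin S ≥ 2. -/
theorem spin_sum_nonneg_integer (m : ℕ) (hm : 1 ≤ m) (S : ℤ) (hS : 2 ≤ S) :
    0 ≤ ∑ j ∈ Finset.Icc (-S) S, (3 * j^2 - S * (S + 1))^(2*m + 1) := by
  classical
  obtain ⟨t, ht0, htS, hS2t, hlb, hub⟩ := SpinAux.exists_t S hS
  have hodd : Odd (2*m+1) := ⟨m, by ring⟩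
  set f : ℤ → ℤ := fun j => (3 * j^2 - S * (S + 1))^(2*m + 1) with hf
  have ht1 : (1:ℤ) ≤ t := by omega
  -- step 1 : symmetrize
  have h1 : ∑ j ∈ Icc (-S) S, f j = (∑ j ∈ Icc (-S) (-1), f j) + ∑ j ∈ Icc 0 S, f j := by
    have := sum_Icc_split f (show -S ≤ (-1:ℤ) by omega) (show (-1:ℤ) ≤ S by omega)
    simpa using this
  have h2 : ∑ j ∈ Icc (-S) (-1), f j = ∑ j ∈ Icc 1 S, f j := by
    refine Finset.sum_nbij' (fun j => -j) (fun j => -j) ?_ ?_ ?_ ?_ ?_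
    · intro a ha; simp only [mem_Icc] at *; omega
    · intro a ha; simp only [mem_Icc] at *; omega
    · intro a _; ring
    · intro a _; ring
    · intro a _; simp only [hf]; ring_nf
  have h3 : ∑ j ∈ Icc 0 S, f j = f 0 + ∑ j ∈ Icc 1 S, f j := by
    have := sum_Icc_split f (le_refl (0:ℤ)) (show (0:ℤ) ≤ S by omega)
    simpa [Finset.Icc_self] using this
  have h4 : ∑ j ∈ Icc 1 S, f j = (∑ j ∈ Icc 1 t, f j) + ∑ j ∈ Icc (t+1) S, f j :=
    sum_Icc_split f ht1 (by omega)
  have h5 : ∑ j ∈ Icc 1 t, f j = -∑ j ∈ Icc 1 t, (bb S j)^(2*m+1) := by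
    rw [← Finset.sum_neg_distrib]
    refine Finset.sum_congr rfl (fun j hj => ?_)
    have hb : 3 * j^2 - S * (S + 1) = -(bb S j) := by simp only [bb]; ring
    simp only [hf, hb, hodd.neg_pow]
  have h6 : ∑ j ∈ Icc (t+1) S, f j = ∑ s ∈ Icc 1 (S-t), (vv S s)^(2*m+1) := by
    refine Finset.sum_nbij' (fun j => S+1-j) (fun s => S+1-s) ?_ ?_ ?_ ?_ ?_
    · intro a ha; simp only [mem_Icc] at *; omega
    · intro a ha; simp only [mem_Icc] at *; omega
    · intro a _; ring
    · intro a _; ring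
    · intro a ha
      simp only [mem_Icc] at ha
      have hv : vv S (S+1-a) = 3*(S+1-(S+1-a))^2 - S*(S+1) :=
        vv_pos_eq ht0 hub (by omega)
      simp only [hf, hv]
      ring_nf
  have h7 : ∑ s ∈ Icc 1 (S-t), (vv S s)^(2*m+1) = ∑ s ∈ Icc 1 (t+1), (vv S s)^(2*m+1) := by
    refine Finset.sum_subset (Finset.Icc_subset_Icc le_rfl (by omega)) ?_
    intro x hx hnx
    simp only [mem_Icc] at hx hnx
    rw [vv_zero ht0 hlb (by omega) (by omega), zero_pow (by omega)]
  have h8 : ∑ j ∈ Icc 1 t, (vv S (j+1))^(2*m+1)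
      = (∑ s ∈ Icc 1 (t+1), (vv S s)^(2*m+1)) - (vv S 1)^(2*m+1) := by
    have e1 : ∑ j ∈ Icc 1 t, (vv S (j+1))^(2*m+1) = ∑ s ∈ Icc 2 (t+1), (vv S s)^(2*m+1) := by
      refine Finset.sum_nbij' (fun j => j+1) (fun s => s-1) ?_ ?_ ?_ ?_ ?_
      · intro a ha; simp only [mem_Icc] at *; omega
      · intro a ha; simp only [mem_Icc] at *; omega
      · intro a _; ring
      · intro a _; ring
      · intro a _; rfl
    have e2 := sum_Icc_split (fun s => (vv S s)^(2*m+1)) (le_refl (1:ℤ)) (show (1:ℤ) ≤ t+1 by omega)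
    simp only [Finset.Icc_self, Finset.sum_singleton] at e2
    norm_num at e2
    rw [e1]
    linarith [e2]
  have h10 : vv S (t+1) = 0 := vv_zero ht0 hlb (by omega) (by omega)
  have h9 : ∑ j ∈ Icc 1 t, (vv S j)^(2*m+1) = ∑ s ∈ Icc 1 (t+1), (vv S s)^(2*m+1) := by
    have e := sum_Icc_top (fun s => (vv S s)^(2*m+1)) (show (1:ℤ) ≤ t+1 by omega)
    have hz : (vv S (t+1))^(2*m+1) = 0 := by
      rw [h10]; exact zero_pow (by omega)
    simp only [hz, add_zero] at e
    exact e.symm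
  have hf0 : f 0 = -(bb S 0)^(2*m+1) := by
    have hb : 3 * (0:ℤ)^2 - S * (S + 1) = -(bb S 0) := by simp [bb]
    simp only [hf, hb, hodd.neg_pow]
  -- main identity
  have hsplitblocks : ∑ r ∈ Icc 1 t, ((vv S r)^(2*m+1) + (vv S (r+1))^(2*m+1) - 2*(bb S r)^(2*m+1))
      = (∑ r ∈ Icc 1 t, (vv S r)^(2*m+1)) + (∑ r ∈ Icc 1 t, (vv S (r+1))^(2*m+1))
        - 2 * ∑ r ∈ Icc 1 t, (bb S r)^(2*m+1) := by
    rw [Finset.sum_sub_distrib, Finset.sum_add_distrib, ← Finset.mul_sum]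
  have hmain : ∑ j ∈ Icc (-S) S, f j
      = ((vv S 1)^(2*m+1) - (bb S 0)^(2*m+1))
        + ∑ r ∈ Icc 1 t, ((vv S r)^(2*m+1) + (vv S (r+1))^(2*m+1) - 2*(bb S r)^(2*m+1)) := by
    rw [hsplitblocks, h9, h8]
    linarith [h1, h2, h3, h4, h5, h6, h7, hf0]
  -- per-block tangent bounds
  have hbb0 : 0 ≤ bb S 0 := bb_nonneg ht0 hlb le_rfl ht0
  have hcc : ∀ r, 0 ≤ r → r ≤ t → cc m S r = (bb S r)^(2*m) := by
    intro r hr1 hr2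
    simp only [cc, max_eq_left (bb_nonneg ht0 hlb hr1 hr2)]
  have hblock0 : (2*m+1:ℤ) * cc m S 0 * dd S 0 ≤ (vv S 1)^(2*m+1) - (bb S 0)^(2*m+1) := by
    have htan := tangent (2*m) (bb S 0) (vv S 1) hbb0 (le_max_right _ _)
    push_cast at htan
    rw [hcc 0 le_rfl ht0, show dd S 0 = vv S 1 - bb S 0 from if_pos rfl]
    linarith [htan]
  have hblockr : ∀ r ∈ Icc (1:ℤ) t,
      (2*m+1:ℤ) * cc m S r * dd S r
        ≤ (vv S r)^(2*m+1) + (vv S (r+1))^(2*m+1) - 2*(bb S r)^(2*m+1) := by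
    intro r hr
    simp only [mem_Icc] at hr
    have hbbr : 0 ≤ bb S r := bb_nonneg ht0 hlb (by omega) hr.2
    have htan1 := tangent (2*m) (bb S r) (vv S r) hbbr (le_max_right _ _)
    have htan2 := tangent (2*m) (bb S r) (vv S (r+1)) hbbr (le_max_right _ _)
    push_cast at htan1 htan2
    rw [hcc r (by omega) hr.2,
      show dd S r = vv S r + vv S (r+1) - 2 * bb S r from if_neg (by omega)]
    linarith [htan1, htan2]
  -- assemble
  have hsum_le : ∑ r ∈ Icc 0 t, ((2*m+1:ℤ) * cc m S r * dd S r) ≤ ∑ j ∈ Icc (-S) S, f j := by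
    rw [hmain, sum_Icc_split (fun r => (2*m+1:ℤ) * cc m S r * dd S r) (le_refl (0:ℤ)) ht0]
    simp only [Finset.Icc_self, Finset.sum_singleton]
    have : (0:ℤ)+1 = 1 := by norm_num
    rw [this]
    exact add_le_add hblock0 (Finset.sum_le_sum hblockr)
  have habel := abel (cc m S) (dd S) (fun i _ => cc_nonneg m i) (fun i hi => cc_mono m hi) t ht0
    (fun ρ hρ1 hρ2 => Delta_nonneg hS ht0 htS hS2t hlb hub hρ1 hρ2)
  have hDt : ∑ r ∈ Icc 0 t, dd S r = 0 := Delta_t hS ht0 htS hS2t hlb hub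
  have habel0 : 0 ≤ ∑ r ∈ Icc 0 t, cc m S r * dd S r := by
    rw [hDt] at habel
    simpa using habel
  have hfinal : 0 ≤ ∑ r ∈ Icc 0 t, ((2*m+1:ℤ) * cc m S r * dd S r) := by
    have : ∑ r ∈ Icc 0 t, ((2*m+1:ℤ) * cc m S r * dd S r)
        = (2*m+1:ℤ) * ∑ r ∈ Icc 0 t, cc m S r * dd S r := by
      rw [Finset.mul_sum]
      exact Finset.sum_congr rfl (fun r _ => by ring)
    rw [this]
    positivity
  linarith [hsum_le, hfinal]
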